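/- For every x ∈ (0,∞)^A and every i ∈ {1,…,A}, the Lyapunov function L satisfies x_i · (∂L/∂x_i)(x) = −G_i(x), where G is the drift field extended to (0,∞)^A by the same formula. -/
import Mathlib


open scoped BigOperators

/-- `p_i(x) = α_i x_i^β / (∑_j α_j x_j^β)` (real powers). -/
noncomputable def pF (A : ℕ) (α : Fin A → ℝ) (β : ℝ) (x : Fin A → ℝ) (i : Fin A) : ℝ :=
  α i * x i ^ β / ∑ j, α j * x j ^ β

/-- The drift field `G(x) = (1-r) p(x) + r γ - x` on the positive orthant. -/
noncomputable def GF (A : ℕ) (α : Fin A → ℝ) (β r : ℝ) (γ : Fin A → ℝ)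
    (x : Fin A → ℝ) (i : Fin A) : ℝ :=
  (1 - r) * pF A α β x i + r * γ i - x i

/-- The Lyapunov function
`L(x) = -((1-r)/β) log(∑_j α_j x_j^β) - r ∑_i γ_i log x_i + ∑_i x_i`. -/
noncomputable def LF (A : ℕ) (α : Fin A → ℝ) (β r : ℝ) (γ : Fin A → ℝ)
    (x : Fin A → ℝ) : ℝ :=
  -((1 - r) / β) * Real.log (∑ j, α j * x j ^ β)
    - r * ∑ i, γ i * Real.log (x i) + ∑ i, x i

/-- for every `x` in the positive orthant and every `i`,
`x_i · (∂L/∂x_i)(x) = -G_i(x)`. -/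
theorem lyapunov_partial_deriv_eq_neg_drift
    (A : ℕ) (hA : 2 ≤ A) (α : Fin A → ℝ) (hα : ∀ i, 0 < α i)
    (β : ℝ) (hβ : β ≠ 0) (r : ℝ) (hr : r ∈ Set.Icc (0 : ℝ) 1)
    (γ : Fin A → ℝ) (hγ0 : ∀ i, 0 ≤ γ i) (hγ1 : ∑ i, γ i = 1)
    (x : Fin A → ℝ) (hx : ∀ i, 0 < x i) (i : Fin A) :
    ∃ d : ℝ,
      HasDerivAt (fun t : ℝ => LF A α β r γ (Function.update x i t)) d (x i) ∧
      x i * d = -(GF A α β r γ x i) := by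
  have hxi : (0:ℝ) < x i := hx i
  have hxne : x i ≠ 0 := ne_of_gt hxi
  set C : ℝ := ∑ j ∈ Finset.univ.erase i, α j * x j ^ β with hC
  set D : ℝ := ∑ j ∈ Finset.univ.erase i, γ j * Real.log (x j) with hD
  set E : ℝ := ∑ j ∈ Finset.univ.erase i, x j with hE
  have hsum1 : ∀ t : ℝ, ∑ j, α j * (Function.update x i t j) ^ β = α i * t ^ β + C := by
    intro t
    rw [← Finset.add_sum_erase _ _ (Finset.mem_univ i)]
    simp only [Function.update_self]
    congr 1
    refine Finset.sum_congr rfl fun j hj => ?_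
    rw [Function.update_of_ne (Finset.ne_of_mem_erase hj)]
  have hsum2 : ∀ t : ℝ, ∑ j, γ j * Real.log (Function.update x i t j)
      = γ i * Real.log t + D := by
    intro t
    rw [← Finset.add_sum_erase _ _ (Finset.mem_univ i)]
    simp only [Function.update_self]
    congr 1
    refine Finset.sum_congr rfl fun j hj => ?_
    rw [Function.update_of_ne (Finset.ne_of_mem_erase hj)]
  have hsum3 : ∀ t : ℝ, ∑ j, Function.update x i t j = t + E := by
    intro t
    rw [← Finset.add_sum_erase _ _ (Finset.mem_univ i)]
    simp only [Function.update_self]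
    congr 1
    refine Finset.sum_congr rfl fun j hj => ?_
    rw [Function.update_of_ne (Finset.ne_of_mem_erase hj)]
  have hCpos : 0 ≤ C := by
    refine Finset.sum_nonneg fun j _ => ?_
    exact le_of_lt (mul_pos (hα j) (Real.rpow_pos_of_pos (hx j) β))
  have hS : (0:ℝ) < α i * (x i) ^ β + C :=
    add_pos_of_pos_of_nonneg (mul_pos (hα i) (Real.rpow_pos_of_pos hxi β)) hCpos
  have hSne : α i * (x i) ^ β + C ≠ 0 := ne_of_gt hS
  -- derivatives
  have h1 : HasDerivAt (fun t : ℝ => t ^ β) (β * (x i) ^ (β - 1)) (x i) :=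
    Real.hasDerivAt_rpow_const (Or.inl hxne)
  have h2 : HasDerivAt (fun t : ℝ => α i * t ^ β + C)
      (α i * (β * (x i) ^ (β - 1))) (x i) := (h1.const_mul (α i)).add_const C
  have h3 : HasDerivAt (fun t : ℝ => Real.log (α i * t ^ β + C))
      ((α i * (β * (x i) ^ (β - 1))) / (α i * (x i) ^ β + C)) (x i) := h2.log hSne
  have h4 : HasDerivAt (fun t : ℝ => γ i * Real.log t + D)
      (γ i * (x i)⁻¹) (x i) := ((Real.hasDerivAt_log hxne).const_mul (γ i)).add_const D
  have h5 : HasDerivAt (fun t : ℝ => t + E) 1 (x i) := (hasDerivAt_id (x i)).add_const E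
  set d : ℝ := -((1 - r) / β) * ((α i * (β * (x i) ^ (β - 1))) / (α i * (x i) ^ β + C))
      - r * (γ i * (x i)⁻¹) + 1 with hd
  have hL : HasDerivAt (fun t : ℝ => LF A α β r γ (Function.update x i t)) d (x i) := by
    have hfun : (fun t : ℝ => LF A α β r γ (Function.update x i t))
        = fun t : ℝ => -((1 - r) / β) * Real.log (α i * t ^ β + C)
          - r * (γ i * Real.log t + D) + (t + E) := by
      funext t
      simp only [LF, hsum1 t, hsum2 t, hsum3 t]
    rw [hfun, hd]
    exact ((h3.const_mul (-((1 - r) / β))).sub (h4.const_mul r)).add h5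
  refine ⟨d, hL, ?_⟩
  have hStot : ∑ j, α j * x j ^ β = α i * (x i) ^ β + C := by
    have := hsum1 (x i)
    rwa [Function.update_eq_self] at this
  have hpow : (x i) ^ (β - 1) = (x i) ^ β / x i := by
    rw [Real.rpow_sub hxi, Real.rpow_one]
  simp only [GF, pF, hStot, hd, hpow]
  field_simp
  ring
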